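/- A simple n-row 0-1 matrix (n ≥ 2) is T_2^1-saturated if and only if its columns are the characteristic vectors of a maximal chain ∅ ⊂ A_1 ⊂ A_2 ⊂ ⋯ ⊂ [n] in the subset lattice of [n]; consequently every T_2^1-saturated n-row matrix has exactly n + 1 columns. -/

import Mathlib

/-- `F` is a submatrix of `M` (up to row/column permutations): there are injections
selecting rows and columns of `M` giving `F`. -/
def IsSubmatrix {α : Type*} {k c n m : ℕ} (F : Fin k → Fin c → α) (M : Fin n → Fin m → α) :
    Prop :=
  ∃ r : Fin k → Fin n, ∃ s : Fin c → Fin m,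
    Function.Injective r ∧ Function.Injective s ∧ ∀ i j, M (r i) (s j) = F i j

/-- A matrix is simple if its columns are pairwise distinct. -/
def Simple' {α : Type*} {n m : ℕ} (M : Fin n → Fin m → α) : Prop :=
  ∀ j₁ j₂ : Fin m, (∀ i, M i j₁ = M i j₂) → j₁ = j₂

/-- `C` occurs as a column of `M`. -/
def IsCol {α : Type*} {n m : ℕ} (M : Fin n → Fin m → α) (C : Fin n → α) : Prop :=
  ∃ j, ∀ i, M i j = C i

/-- The matrix `[M, C]` obtained by appending the column `C` to `M`. -/
def addCol {α : Type*} {n m : ℕ} (M : Fin n → Fin m → α) (C : Fin n → α) :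
    Fin n → Fin (m + 1) → α :=
  fun i j => if h : (j : ℕ) < m then M i ⟨j, h⟩ else C i

/-- `M` is `F`-saturated: simple, `F`-free, and adding any missing column creates `F`. -/
def Saturated {α : Type*} {k c n m : ℕ} (F : Fin k → Fin c → α) (M : Fin n → Fin m → α) :
    Prop :=
  Simple' M ∧ ¬ IsSubmatrix F M ∧
    ∀ C : Fin n → α, ¬ IsCol M C → IsSubmatrix F (addCol M C)

/-- The set of sizes (numbers of columns) of `F`-saturated `n`-row matrices. -/
def satSet {α : Type*} {k c : ℕ} (F : Fin k → Fin c → α) (n : ℕ) : Set ℕ :=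
  {m | ∃ M : Fin n → Fin m → α, Saturated F M}

/-- The set of sizes of simple `F`-free `n`-row matrices. -/
def forbSet {α : Type*} {k c : ℕ} (F : Fin k → Fin c → α) (n : ℕ) : Set ℕ :=
  {m | ∃ M : Fin n → Fin m → α, Simple' M ∧ ¬ IsSubmatrix F M}

/-- `K_k`: the `k × 2^k` 0-1 matrix of all distinct 0-1 columns of length `k`. -/
def Kfull (k : ℕ) : Fin k → Fin (2 ^ k) → Bool :=
  fun i j => Nat.testBit j.val i.val

def T21 : Fin 2 → Fin 2 → Bool := ![![true, false], ![false, true]]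

namespace Stmt14Aux

open Finset

variable {n m : ℕ}

def colSet (M : Fin n → Fin m → Bool) (j : Fin m) : Finset (Fin n) :=
  Finset.univ.filter fun i => M i j = true

lemma mem_colSet {M : Fin n → Fin m → Bool} {j : Fin m} {i : Fin n} :
    i ∈ colSet M j ↔ M i j = true := by simp [colSet]

lemma colSet_eq_iff {M : Fin n → Fin m → Bool} {j₁ j₂ : Fin m} :
    colSet M j₁ = colSet M j₂ ↔ ∀ i, M i j₁ = M i j₂ := by
  constructor
  · intro h i
    have h' := Finset.ext_iff.mp h i
    simp only [mem_colSet] at h'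
    cases h1 : M i j₁ <;> cases h2 : M i j₂ <;> simp_all
  · intro h; ext i; simp [mem_colSet, h i]

lemma sub_iff {M : Fin n → Fin m → Bool} :
    IsSubmatrix T21 M ↔ ∃ j₁ j₂ : Fin m,
      ¬ colSet M j₁ ⊆ colSet M j₂ ∧ ¬ colSet M j₂ ⊆ colSet M j₁ := by
  constructor
  · rintro ⟨r, s, hr, hs, h⟩
    refine ⟨s 0, s 1, ?_, ?_⟩
    · intro hsub
      have h1 : r 0 ∈ colSet M (s 0) := mem_colSet.mpr (by rw [h 0 0]; rfl)
      have h2 := mem_colSet.mp (hsub h1)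
      rw [h 0 1] at h2
      exact absurd h2 (by decide)
    · intro hsub
      have h1 : r 1 ∈ colSet M (s 1) := mem_colSet.mpr (by rw [h 1 1]; rfl)
      have h2 := mem_colSet.mp (hsub h1)
      rw [h 1 0] at h2
      exact absurd h2 (by decide)
  · rintro ⟨j₁, j₂, h12, h21⟩
    obtain ⟨i₁, hi₁, hi₁'⟩ := Finset.not_subset.mp h12
    obtain ⟨i₂, hi₂, hi₂'⟩ := Finset.not_subset.mp h21
    have hne : i₁ ≠ i₂ := fun h => hi₁' (h ▸ hi₂)
    have hjne : j₁ ≠ j₂ := fun h => hi₁' (h ▸ hi₁)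
    refine ⟨![i₁, i₂], ![j₁, j₂], ?_, ?_, ?_⟩
    · intro a b hab
      fin_cases a <;> fin_cases b <;> simp_all
    · intro a b hab
      fin_cases a <;> fin_cases b <;> simp_all
    · have e1 : M i₁ j₁ = true := mem_colSet.mp hi₁
      have e2 : M i₁ j₂ = false := by
        cases h : M i₁ j₂
        · rfl
        · exact absurd (mem_colSet.mpr h) hi₁'
      have e3 : M i₂ j₂ = true := mem_colSet.mp hi₂
      have e4 : M i₂ j₁ = false := by
        cases h : M i₂ j₁
        · rfl
        · exact absurd (mem_colSet.mpr h) hi₂'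
      intro a b
      fin_cases a <;> fin_cases b <;> simp [T21, e1, e2, e3, e4]

lemma addCol_castSucc {M : Fin n → Fin m → Bool} {C : Fin n → Bool} (i : Fin n) (j : Fin m) :
    addCol M C i j.castSucc = M i j := by
  simp [addCol, j.isLt]

lemma addCol_last {M : Fin n → Fin m → Bool} {C : Fin n → Bool} (i : Fin n) :
    addCol M C i (Fin.last m) = C i := by
  simp [addCol]

/-- Build a `T21` submatrix of `addCol M C` from a column incomparable with `C`. -/
lemma addCol_build {M : Fin n → Fin m → Bool} {C : Fin n → Bool} {j : Fin m}
    (h1 : ¬ colSet M j ⊆ Finset.univ.filter (fun i => C i = true))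
    (h2 : ¬ Finset.univ.filter (fun i => C i = true) ⊆ colSet M j) :
    IsSubmatrix T21 (addCol M C) := by
  obtain ⟨i₁, hi₁, hi₁'⟩ := Finset.not_subset.mp h1
  obtain ⟨i₂, hi₂, hi₂'⟩ := Finset.not_subset.mp h2
  have hne : i₁ ≠ i₂ := fun h => hi₁' (h ▸ hi₂)
  have e1 : M i₁ j = true := mem_colSet.mp hi₁
  have e2 : C i₁ = false := by
    cases h : C i₁
    · rfl
    · exact absurd (Finset.mem_filter.mpr ⟨Finset.mem_univ i₁, h⟩) hi₁'
  have e3 : C i₂ = true := (Finset.mem_filter.mp hi₂).2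
  have e4 : M i₂ j = false := by
    cases h : M i₂ j
    · rfl
    · exact absurd (mem_colSet.mpr h) hi₂'
  refine ⟨![i₁, i₂], ![j.castSucc, Fin.last m], ?_, ?_, ?_⟩
  · intro a b hab
    fin_cases a <;> fin_cases b <;> simp_all
  · intro a b hab
    have : j.castSucc ≠ Fin.last m := Fin.ne_of_lt j.castSucc_lt_last
    have this2 : Fin.last m ≠ j.castSucc := this.symm
    fin_cases a <;> fin_cases b <;> simp_all
  · intro a b
    fin_cases a <;> fin_cases b <;>
      simp [T21, addCol_castSucc, addCol_last, e1, e2, e3, e4]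

/-- Extract an incomparable column from a `T21` submatrix of `addCol M C`,
assuming `M` itself is `T21`-free. -/
lemma addCol_extract {M : Fin n → Fin m → Bool} {C : Fin n → Bool}
    (hfree : ¬ IsSubmatrix T21 M) (hsub : IsSubmatrix T21 (addCol M C)) :
    ∃ j : Fin m, ¬ colSet M j ⊆ Finset.univ.filter (fun i => C i = true) ∧
      ¬ Finset.univ.filter (fun i => C i = true) ⊆ colSet M j := by
  obtain ⟨r, s, hr, hs, h⟩ := hsub
  have key : ∀ a : Fin 2, (s a : ℕ) < m ∨ (s a : ℕ) = m := by
    intro a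
    rcases Nat.lt_succ_iff_lt_or_eq.mp (s a).isLt with h' | h'
    · exact Or.inl h'
    · exact Or.inr h'
  rcases key 0 with h0 | h0 <;> rcases key 1 with h1 | h1
  · exfalso
    apply hfree
    have hlt : ∀ b : Fin 2, (s b : ℕ) < m := by
      intro b; fin_cases b; exacts [h0, h1]
    refine ⟨r, fun b => ⟨(s b : ℕ), hlt b⟩, hr, ?_, ?_⟩
    · intro a b hab
      exact hs (Fin.ext (Fin.mk_eq_mk.mp hab))
    · intro a b
      show M (r a) ⟨(s b : ℕ), hlt b⟩ = T21 a b
      rw [← h a b]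
      simp [addCol, hlt b]
  · -- s 1 is the new column
    refine ⟨⟨s 0, h0⟩, ?_, ?_⟩
    · apply Finset.not_subset.mpr
      refine ⟨r 0, mem_colSet.mpr ?_, ?_⟩
      · have := h 0 0
        rw [show (T21 0 0) = true from rfl] at this
        rw [← this]
        simp [addCol, h0]
      · intro hmem
        have hC := (Finset.mem_filter.mp hmem).2
        have := h 0 1
        rw [show (T21 0 1) = false from rfl] at this
        simp [addCol, h1] at this
        rw [hC] at this
        exact Bool.true_eq_false.mp this
    · apply Finset.not_subset.mpr
      refine ⟨r 1, ?_, ?_⟩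
      · refine Finset.mem_filter.mpr ⟨Finset.mem_univ _, ?_⟩
        have := h 1 1
        rw [show (T21 1 1) = true from rfl] at this
        simp [addCol, h1] at this
        exact this
      · intro hmem
        have hMv := mem_colSet.mp hmem
        have := h 1 0
        rw [show (T21 1 0) = false from rfl] at this
        simp only [addCol] at this
        rw [dif_pos h0] at this
        rw [show (⟨(s 0 : ℕ), h0⟩ : Fin m) = ⟨s 0, h0⟩ from rfl] at this
        rw [hMv] at this
        exact Bool.true_eq_false.mp this
  · -- s 0 is the new column
    refine ⟨⟨s 1, h1⟩, ?_, ?_⟩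
    · apply Finset.not_subset.mpr
      refine ⟨r 1, mem_colSet.mpr ?_, ?_⟩
      · have := h 1 1
        rw [show (T21 1 1) = true from rfl] at this
        rw [← this]
        simp [addCol, h1]
      · intro hmem
        have hC := (Finset.mem_filter.mp hmem).2
        have := h 1 0
        rw [show (T21 1 0) = false from rfl] at this
        simp [addCol, h0] at this
        rw [hC] at this
        exact Bool.true_eq_false.mp this
    · apply Finset.not_subset.mpr
      refine ⟨r 0, ?_, ?_⟩
      · refine Finset.mem_filter.mpr ⟨Finset.mem_univ _, ?_⟩
        have := h 0 0
        rw [show (T21 0 0) = true from rfl] at this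
        simp [addCol, h0] at this
        exact this
      · intro hmem
        have hMv := mem_colSet.mp hmem
        have := h 0 1
        rw [show (T21 0 1) = false from rfl] at this
        simp only [addCol] at this
        rw [dif_pos h1] at this
        rw [hMv] at this
        exact Bool.true_eq_false.mp this
  · exact absurd (hs (Fin.ext (h0.trans h1.symm))) (by decide)

lemma exists_card_col {M : Fin n → Fin m → Bool}
    (hchain : ∀ j₁ j₂ : Fin m, colSet M j₁ ⊆ colSet M j₂ ∨ colSet M j₂ ⊆ colSet M j₁)
    (hmax : ∀ A : Finset (Fin n),
      (∀ j, colSet M j ⊆ A ∨ A ⊆ colSet M j) → ∃ j, colSet M j = A)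
    (k : ℕ) (hk : k ≤ n) : ∃ j, (colSet M j).card = k := by
  by_contra hno
  push_neg at hno
  obtain ⟨A, hAk, hAsmall, hAcase⟩ :
      ∃ A : Finset (Fin n), A.card ≤ k ∧
        (∀ j, (colSet M j).card < k → colSet M j ⊆ A) ∧
        (A = ∅ ∨ ∃ j₀, A = colSet M j₀ ∧ A.card < k) := by
    by_cases hsm : (Finset.univ.filter fun j : Fin m => (colSet M j).card < k).Nonempty
    · obtain ⟨j₀, hj₀mem, hj₀max⟩ :=
        Finset.exists_max_image _ (fun j => (colSet M j).card) hsm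
      have hj₀ : (colSet M j₀).card < k := (Finset.mem_filter.mp hj₀mem).2
      refine ⟨colSet M j₀, le_of_lt hj₀, ?_, Or.inr ⟨j₀, rfl, hj₀⟩⟩
      intro j hj
      have hle := hj₀max j (Finset.mem_filter.mpr ⟨Finset.mem_univ _, hj⟩)
      rcases hchain j j₀ with h | h
      · exact h
      · rw [Finset.eq_of_subset_of_card_le h hle]
    · refine ⟨∅, Nat.zero_le k, ?_, Or.inl rfl⟩
      intro j hj
      exact absurd (Finset.mem_filter.mpr ⟨Finset.mem_univ j, hj⟩)
        (Finset.not_nonempty_iff_eq_empty.mp hsm ▸ Finset.notMem_empty j)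
  obtain ⟨B, hkB, hBbig, hBcase⟩ :
      ∃ B : Finset (Fin n), k ≤ B.card ∧
        (∀ j, k < (colSet M j).card → B ⊆ colSet M j) ∧
        (B = Finset.univ ∨ ∃ j₁, B = colSet M j₁ ∧ k < B.card) := by
    by_cases hbg : (Finset.univ.filter fun j : Fin m => k < (colSet M j).card).Nonempty
    · obtain ⟨j₁, hj₁mem, hj₁min⟩ :=
        Finset.exists_min_image _ (fun j => (colSet M j).card) hbg
      have hj₁ : k < (colSet M j₁).card := (Finset.mem_filter.mp hj₁mem).2
      refine ⟨colSet M j₁, le_of_lt hj₁, ?_, Or.inr ⟨j₁, rfl, hj₁⟩⟩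
      intro j hj
      have hle := hj₁min j (Finset.mem_filter.mpr ⟨Finset.mem_univ _, hj⟩)
      rcases hchain j₁ j with h | h
      · exact h
      · rw [Finset.eq_of_subset_of_card_le h hle]
    · refine ⟨Finset.univ, by simpa using hk, ?_, Or.inl rfl⟩
      intro j hj
      exact absurd (Finset.mem_filter.mpr ⟨Finset.mem_univ j, hj⟩)
        (Finset.not_nonempty_iff_eq_empty.mp hbg ▸ Finset.notMem_empty j)
  have hAB : A ⊆ B := by
    rcases hAcase with rfl | ⟨j₀, rfl, hA⟩
    · exact Finset.empty_subset _
    rcases hBcase with rfl | ⟨j₁, rfl, hB⟩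
    · exact Finset.subset_univ _
    rcases hchain j₀ j₁ with h | h
    · exact h
    · exact absurd (Finset.card_le_card h) (by omega)
  obtain ⟨Cs, hACs, hCsB, hCs⟩ := Finset.exists_subsuperset_card_eq hAB hAk hkB
  have hcomp : ∀ j, colSet M j ⊆ Cs ∨ Cs ⊆ colSet M j := by
    intro j
    rcases lt_trichotomy ((colSet M j).card) k with h | h | h
    · exact Or.inl ((hAsmall j h).trans hACs)
    · exact absurd h (hno j)
    · exact Or.inr (hCsB.trans (hBbig j h))
  obtain ⟨j, hj⟩ := hmax Cs hcomp
  exact hno j (by rw [hj]; exact hCs)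

end Stmt14Aux

open Stmt14Aux in
theorem stmt_14 (n m : ℕ) (hn : 2 ≤ n) (M : Fin n → Fin m → Bool) (hM : Simple' M) :
    (¬ IsSubmatrix T21 M ∧
      ∀ C : Fin n → Bool, ¬ IsCol M C → IsSubmatrix T21 (addCol M C)) ↔
    (m = n + 1 ∧ ∃ σ : Fin m → Fin m, Function.Bijective σ ∧
      (∀ j : Fin m, (Finset.univ.filter fun i => M i (σ j) = true).card = (j : ℕ)) ∧
      ∀ j₁ j₂ : Fin m, j₁ ≤ j₂ → ∀ i, M i (σ j₁) = true → M i (σ j₂) = true) := by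
  constructor
  · rintro ⟨hfree, hsat⟩
    have hchain : ∀ j₁ j₂ : Fin m, colSet M j₁ ⊆ colSet M j₂ ∨ colSet M j₂ ⊆ colSet M j₁ := by
      intro j₁ j₂
      by_contra hc
      rw [not_or] at hc
      exact hfree (sub_iff.mpr ⟨j₁, j₂, hc.1, hc.2⟩)
    have hmax : ∀ A : Finset (Fin n),
        (∀ j, colSet M j ⊆ A ∨ A ⊆ colSet M j) → ∃ j, colSet M j = A := by
      intro A hA
      by_contra hne
      push_neg at hne
      have hnotcol : ¬ IsCol M (fun i => decide (i ∈ A)) := by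
        rintro ⟨j, hj⟩
        apply hne j
        ext i
        simp [mem_colSet, hj i]
      obtain ⟨j, h1, h2⟩ := addCol_extract hfree (hsat _ hnotcol)
      have heq : Finset.univ.filter (fun i => decide (i ∈ A) = true) = A := by
        ext i; simp
      rw [heq] at h1 h2
      rcases hA j with h | h
      · exact h1 h
      · exact h2 h
    have hcardle : ∀ j, (colSet M j).card ≤ n := fun j => by
      simpa using Finset.card_le_univ (colSet M j)
    have hSinj : Function.Injective (colSet M) := fun j₁ j₂ h =>
      hM j₁ j₂ (colSet_eq_iff.mp h)
    let g : Fin m → Fin (n + 1) := fun j => ⟨(colSet M j).card, Nat.lt_succ_of_le (hcardle j)⟩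
    have hginj : Function.Injective g := by
      intro j₁ j₂ h
      have hcc : (colSet M j₁).card = (colSet M j₂).card := Fin.mk_eq_mk.mp h
      apply hSinj
      rcases hchain j₁ j₂ with hsub | hsub
      · exact Finset.eq_of_subset_of_card_le hsub hcc.ge
      · exact (Finset.eq_of_subset_of_card_le hsub hcc.le).symm
    have hgsurj : Function.Surjective g := by
      intro k
      obtain ⟨j, hj⟩ := exists_card_col hchain hmax k (Nat.lt_succ_iff.mp k.isLt)
      exact ⟨j, Fin.ext hj⟩
    have hg : Function.Bijective g := ⟨hginj, hgsurj⟩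
    have hm : m = n + 1 := by simpa using Fintype.card_of_bijective hg
    refine ⟨hm, ?_⟩
    let e : Fin m ≃ Fin m := (finCongr hm).trans (Equiv.ofBijective g hg).symm
    have hge : ∀ j : Fin m, g (e j) = finCongr hm j := fun j =>
      (Equiv.ofBijective g hg).apply_symm_apply _
    have hcard : ∀ j : Fin m, (colSet M (e j)).card = (j : ℕ) := by
      intro j
      have := congrArg Fin.val (hge j)
      simpa [g] using this
    refine ⟨e, e.bijective, hcard, ?_⟩
    intro j₁ j₂ hle i h1
    have hcc : (colSet M (e j₁)).card ≤ (colSet M (e j₂)).card := by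
      rw [hcard j₁, hcard j₂]; exact hle
    have hss : colSet M (e j₁) ⊆ colSet M (e j₂) := by
      rcases hchain (e j₁) (e j₂) with h | h
      · exact h
      · rw [Finset.eq_of_subset_of_card_le h hcc]
    exact mem_colSet.mp (hss (mem_colSet.mpr h1))
  · rintro ⟨hm, σ, hσ, hcard, hnest⟩
    have hsub : ∀ j₁ j₂ : Fin m, j₁ ≤ j₂ → colSet M (σ j₁) ⊆ colSet M (σ j₂) := by
      intro j₁ j₂ h i hi
      exact mem_colSet.mpr (hnest j₁ j₂ h i (mem_colSet.mp hi))
    constructor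
    · intro hsubm
      obtain ⟨j₁, j₂, h12, h21⟩ := sub_iff.mp hsubm
      obtain ⟨a, rfl⟩ := hσ.2 j₁
      obtain ⟨b, rfl⟩ := hσ.2 j₂
      rcases le_total a b with h | h
      · exact h12 (hsub a b h)
      · exact h21 (hsub b a h)
    · intro C hC
      have hCsn : (Finset.univ.filter fun i => C i = true).card ≤ n := by
        simpa using Finset.card_le_univ (Finset.univ.filter fun i => C i = true)
      have hlt : (Finset.univ.filter fun i => C i = true).card < m := by omega
      set j := σ ⟨(Finset.univ.filter fun i => C i = true).card, hlt⟩ with hj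
      have hjcard : (colSet M j).card = (Finset.univ.filter fun i => C i = true).card :=
        hcard ⟨(Finset.univ.filter fun i => C i = true).card, hlt⟩
      have hne : colSet M j ≠ (Finset.univ.filter fun i => C i = true) := by
        intro h
        apply hC
        refine ⟨j, fun i => ?_⟩
        have h' := Finset.ext_iff.mp h i
        simp only [mem_colSet, Finset.mem_filter, Finset.mem_univ, true_and] at h'
        cases hMv : M i j <;> cases hCv : C i <;> simp_all
      apply addCol_build (j := j)
      · intro hss
        exact hne (Finset.eq_of_subset_of_card_le hss hjcard.ge)
      · intro hss
        exact hne (Finset.eq_of_subset_of_card_le hss hjcard.le).symm
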